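/- Let Φ = (G, φ) be a T-gain graph on n vertices with at least one edge. For r ≥ 2 and 0 < s, t < ∞ with 1/s + 1/t = 1, and for each vertex index p: (Ω_p(|A(Φ)|^r))^t / (Ω_p(|A(Φ)|^{s(r-1)+1}))^{t/s} ≤ E_Φ(v_p), where Ω_p(B) denotes the (p,p)-entry of B. -/

import Mathlib

open Matrix BigOperators
open scoped Classical ComplexOrder

noncomputable def Matrix.PosSemidef.sqrt {n 𝕜 : Type*} [Fintype n] [DecidableEq n] [RCLike 𝕜]
    {A : Matrix n n 𝕜} (hA : A.PosSemidef) : Matrix n n 𝕜 :=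
  hA.isHermitian.eigenvectorUnitary.1 * diagonal ((↑) ∘ (√·) ∘ hA.isHermitian.eigenvalues) *
  (star hA.isHermitian.eigenvectorUnitary : Matrix n n 𝕜)

theorem Matrix.PosSemidef.isHermitian_sqrt {n 𝕜 : Type*} [Fintype n] [DecidableEq n] [RCLike 𝕜]
    {A : Matrix n n 𝕜} (hA : A.PosSemidef) : hA.sqrt.IsHermitian := by
  unfold Matrix.PosSemidef.sqrt
  simp only [IsHermitian, conjTranspose_mul, diagonal_conjTranspose, Matrix.mul_assoc]
  simp only [Function.comp_def, star_eq_conjTranspose, conjTranspose_conjTranspose]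
  congr 3
  funext i
  simp
/-- A complex unit gain graph (`𝕋`-gain graph) on a finite vertex type `V`. -/
structure TGainGraph (V : Type*) [Fintype V] [DecidableEq V] where
  G : SimpleGraph V
  A : Matrix V V ℂ
  herm : A.IsHermitian
  unitGain : ∀ i j, G.Adj i j → ‖A i j‖ = 1
  zeroGain : ∀ i j, ¬ G.Adj i j → A i j = 0

namespace TGainGraph

variable {V : Type*} [Fintype V] [DecidableEq V]

/-- The energy of a `𝕋`-gain graph: sum of absolute values of eigenvalues of `A(Φ)`. -/
noncomputable def energy (Φ : TGainGraph V) : ℝ :=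
  ∑ i, |Φ.herm.eigenvalues i|

/-- `|A(Φ)| = (A(Φ) A(Φ)ᴴ)^{1/2}`. -/
noncomputable def absMatrix (Φ : TGainGraph V) : Matrix V V ℂ :=
  (Matrix.posSemidef_self_mul_conjTranspose Φ.A).sqrt

/-- Energy of a vertex: the `(i,i)` entry of `|A(Φ)|`. -/
noncomputable def vertexEnergy (Φ : TGainGraph V) (i : V) : ℝ :=
  (Φ.absMatrix i i).re

/-- Degree of a vertex in the underlying graph. -/
noncomputable def deg (Φ : TGainGraph V) (i : V) : ℕ := Φ.G.degree i

/-- Maximum vertex degree of the underlying graph. -/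
noncomputable def maxDeg (Φ : TGainGraph V) : ℕ := Φ.G.maxDegree

/-- Spectral radius of `A(Φ)`. -/
noncomputable def specRadius (Φ : TGainGraph V) : ℝ :=
  ⨆ i, |Φ.herm.eigenvalues i|

/-- Switching equivalence of two gain graphs on the same vertex set: same
underlying graph, and adjacency matrices conjugate by a diagonal unitary. -/
def SwitchEquiv (Φ₁ Φ₂ : TGainGraph V) : Prop :=
  Φ₁.G = Φ₂.G ∧ ∃ U : Matrix V V ℂ, U.IsDiag ∧ U ∈ Matrix.unitaryGroup V ℂ ∧
    Φ₁.A = U * Φ₂.A * Uᴴ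

/-- `Φ` switches to the all-ones gain on its underlying graph,
i.e. `Φ ∼ (G, 1)` (equivalently, `Φ` is balanced). -/
def SwitchesToOne (Φ : TGainGraph V) : Prop :=
  ∃ U : Matrix V V ℂ, U.IsDiag ∧ U ∈ Matrix.unitaryGroup V ℂ ∧
    Φ.A = U * (Φ.G.adjMatrix ℂ) * Uᴴ

/-- `Φ ∼ (K_{a,b}, 1)`: the underlying graph is (isomorphic to) the complete
bipartite graph `K_{a,b}` via some bijection `e`, and the gains switch to `1`. -/
def SwitchEquivToCompleteBipartite (Φ : TGainGraph V) (a b : ℕ) : Prop :=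
  (∃ e : V ≃ (Fin a ⊕ Fin b), ∀ i j, Φ.G.Adj i j ↔
      (completeBipartiteGraph (Fin a) (Fin b)).Adj (e i) (e j)) ∧
  SwitchesToOne Φ

/-- The gain of a walk: the product of the gains of its edges in order. -/
noncomputable def walkGain (Φ : TGainGraph V) {u v : V} (w : Φ.G.Walk u v) : ℂ :=
  (w.darts.map (fun d => Φ.A d.fst d.snd)).prod

/-- A gain graph is balanced if every cycle has gain `1`. -/
def Balanced (Φ : TGainGraph V) : Prop :=
  ∀ (u : V) (w : Φ.G.Walk u u), w.IsCycle → Φ.walkGain w = 1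

/-- The restriction of a gain graph to a set of vertices. -/
noncomputable def restrict (Φ : TGainGraph V) (s : Set V) : TGainGraph s where
  G := Φ.G.induce s
  A := Φ.A.submatrix (Subtype.val) (Subtype.val)
  herm := Φ.herm.submatrix _
  unitGain := fun i j h => Φ.unitGain i j h
  zeroGain := fun i j h => Φ.zeroGain i j h

/-- The vertex set of the connected component `c`. -/
def componentSet (Φ : TGainGraph V) (c : Φ.G.ConnectedComponent) : Set V :=
  {v | Φ.G.connectedComponentMk v = c}

/-- Every connected component of `Φ` is either an isolated vertex or a balanced
complete bipartite gain graph `(K_{k,k},1)` with a perfect matching. -/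
def ComponentsBalancedCompleteBipartitePM (Φ : TGainGraph V) : Prop :=
  ∀ c : Φ.G.ConnectedComponent,
    (∀ v ∈ Φ.componentSet c, ∀ w, ¬ Φ.G.Adj v w) ∨
    ∃ k : ℕ, 0 < k ∧
      (Φ.restrict (Φ.componentSet c)).SwitchEquivToCompleteBipartite k k

/-- The matching number of a graph. -/
noncomputable def matchingNumber (G : SimpleGraph V) : ℕ :=
  sSup {k | ∃ M : G.Subgraph, M.IsMatching ∧ M.edgeSet.ncard = k}

/-- The vertex cover number of a graph. -/
noncomputable def coverNumber (G : SimpleGraph V) : ℕ :=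
  sInf {k | ∃ s : Finset V, s.card = k ∧ ∀ i j, G.Adj i j → i ∈ s ∨ j ∈ s}

/-- The number of odd cycles of a graph (counted by their edge sets). -/
noncomputable def oddCycleCount (G : SimpleGraph V) : ℕ :=
  Set.ncard {s : Set (Sym2 V) | ∃ (u : V) (w : G.Walk u u),
    w.IsCycle ∧ Odd w.length ∧ s = {e | e ∈ w.edges}}

end TGainGraph

/-- Real powers of `|A(Φ)|`, defined through the spectral decomposition of the
positive semidefinite matrix `|A(Φ)|` (functional calculus). -/
noncomputable def TGainGraph.absPow {V : Type*} [Fintype V] [DecidableEq V]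
    (Φ : TGainGraph V) (x : ℝ) : Matrix V V ℂ :=
  letI h : (Φ.absMatrix).IsHermitian :=
    (Matrix.posSemidef_self_mul_conjTranspose Φ.A).isHermitian_sqrt
  (h.eigenvectorUnitary : Matrix V V ℂ) *
    Matrix.diagonal (fun i => ((h.eigenvalues i ^ x : ℝ) : ℂ)) *
    (star h.eigenvectorUnitary : Matrix V V ℂ)

open TGainGraph in
lemma diag_entry_re' {V : Type*} [Fintype V] [DecidableEq V]
    (U : Matrix V V ℂ) (d : V → ℝ) (p : V) :
    ((U * Matrix.diagonal (fun i => ((d i : ℝ) : ℂ)) * star U) p p).re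
      = ∑ i, d i * Complex.normSq (U p i) := by
  simp only [Matrix.mul_apply, Matrix.diagonal_apply, Matrix.star_apply,
    mul_ite, mul_zero, Finset.sum_ite_eq', Finset.mem_univ, if_true]
  rw [Complex.re_sum]
  refine Finset.sum_congr rfl fun i _ => ?_
  have h : U p i * (d i : ℂ) * star (U p i) = (d i : ℂ) * (U p i * star (U p i)) := by ring
  rw [h, Complex.star_def, Complex.mul_conj]
  simp [← Complex.ofReal_mul]

open TGainGraph in
/-- Hölder-type lower bound for the vertex energy: for `r ≥ 2` and conjugate
exponents `s, t`, `Ω_p(|A|^r)^t / Ω_p(|A|^{s(r-1)+1})^{t/s} ≤ E_Φ(v_p)`. -/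
theorem holder_lower_bound_vertexEnergy {V : Type*} [Fintype V] [DecidableEq V]
    (Φ : TGainGraph V) (hE : Φ.G.edgeSet.Nonempty)
    (r : ℕ) (hr : 2 ≤ r) (s t : ℝ) (hs : 0 < s) (ht : 0 < t)
    (hst : 1 / s + 1 / t = 1) (p : V) :
    ((Φ.absPow r) p p).re ^ t / ((Φ.absPow (s * ((r : ℝ) - 1) + 1)) p p).re ^ (t / s)
      ≤ Φ.vertexEnergy p := by
  classical
  have hpsd : (Φ.absMatrix).PosSemidef := by
    unfold TGainGraph.absMatrix Matrix.PosSemidef.sqrt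
    have hd := Matrix.PosSemidef.diagonal (R := ℂ) (n := V)
      (d := (((↑) : ℝ → ℂ) ∘ (√·) ∘ (Matrix.posSemidef_self_mul_conjTranspose Φ.A).isHermitian.eigenvalues))
      (fun i => Complex.zero_le_real.mpr (Real.sqrt_nonneg _))
    have := hd.mul_mul_conjTranspose_same
      ((Matrix.posSemidef_self_mul_conjTranspose Φ.A).isHermitian.eigenvectorUnitary : Matrix V V ℂ)
    rw [star_eq_conjTranspose]
    exact this
  set U : Matrix V V ℂ := (hpsd.1.eigenvectorUnitary : Matrix V V ℂ) with hU
  set lam : V → ℝ := hpsd.1.eigenvalues with hlamdef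
  set w : V → ℝ := fun i => Complex.normSq (U p i) with hwdef
  have hlam : ∀ i, 0 ≤ lam i := hpsd.eigenvalues_nonneg
  have hw : ∀ i, 0 ≤ w i := fun i => Complex.normSq_nonneg _
  have hpow : ∀ x : ℝ, ((Φ.absPow x) p p).re = ∑ i, lam i ^ x * w i := by
    intro x
    exact diag_entry_re' U (fun i => lam i ^ x) p
  have hVE : Φ.vertexEnergy p = ∑ i, lam i * w i := by
    have h1 : Φ.absMatrix p p
        = (U * Matrix.diagonal (fun i => ((lam i : ℝ) : ℂ)) * star U) p p := by
      conv_lhs => rw [hpsd.1.spectral_theorem]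
      rfl
    unfold TGainGraph.vertexEnergy
    rw [h1, diag_entry_re']
  set c : ℝ := s * ((r:ℝ) - 1) + 1 with hcdef
  have hs' : s ≠ 0 := ne_of_gt hs
  have ht' : t ≠ 0 := ne_of_gt ht
  have e2 : t⁻¹ + s⁻¹ = 1 := by
    rw [inv_eq_one_div, inv_eq_one_div]; linarith
  have e1 : t⁻¹ + c * s⁻¹ = (r:ℝ) := by
    have h3 : c * s⁻¹ = ((r:ℝ) - 1) + s⁻¹ := by
      rw [hcdef]; field_simp
    rw [h3]; linarith
  have hrpos : (0:ℝ) < (r:ℝ) := by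
    have : (0:ℕ) < r := by omega
    exact_mod_cast this
  have ht1 : 1 < t := by
    have h1t : 1/t < 1 := by
      have : 0 < 1/s := by positivity
      linarith
    rwa [div_lt_one ht] at h1t
  have hts : Real.HolderConjugate t s := Real.holderConjugate_iff.mpr ⟨ht1, e2⟩
  set f : V → ℝ := fun i => (lam i * w i) ^ t⁻¹ with hfdef
  set g : V → ℝ := fun i => (lam i ^ c * w i) ^ s⁻¹ with hgdef
  have hfg : ∀ i, f i * g i = lam i ^ (r:ℝ) * w i := by
    intro i
    have hb1 : (0:ℝ) ≤ lam i ^ c := Real.rpow_nonneg (hlam i) c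
    calc f i * g i
        = (lam i ^ t⁻¹ * w i ^ t⁻¹) * (lam i ^ (c * s⁻¹) * w i ^ s⁻¹) := by
          rw [hfdef, hgdef]
          simp only []
          rw [Real.mul_rpow (hlam i) (hw i), Real.mul_rpow hb1 (hw i),
            ← Real.rpow_mul (hlam i)]
      _ = lam i ^ (t⁻¹ + c * s⁻¹) * w i ^ (t⁻¹ + s⁻¹) := by
          rw [Real.rpow_add' (hlam i) (by rw [e1]; exact ne_of_gt hrpos),
            Real.rpow_add' (hw i) (by rw [e2]; norm_num)]
          ring
      _ = lam i ^ (r:ℝ) * w i := by rw [e1, e2, Real.rpow_one]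
  have hft : ∀ i, f i ^ t = lam i * w i := by
    intro i
    rw [hfdef]; simp only []
    rw [← Real.rpow_mul (mul_nonneg (hlam i) (hw i)), inv_mul_cancel₀ ht', Real.rpow_one]
  have hgs : ∀ i, g i ^ s = lam i ^ c * w i := by
    intro i
    rw [hgdef]; simp only []
    rw [← Real.rpow_mul (mul_nonneg (Real.rpow_nonneg (hlam i) c) (hw i)),
      inv_mul_cancel₀ hs', Real.rpow_one]
  have key := Real.inner_le_Lp_mul_Lq_of_nonneg (s := Finset.univ) (f := f) (g := g) hts
    (fun i _ => Real.rpow_nonneg (mul_nonneg (hlam i) (hw i)) _)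
    (fun i _ => Real.rpow_nonneg (mul_nonneg (Real.rpow_nonneg (hlam i) c) (hw i)) _)
  rw [Finset.sum_congr rfl (fun i _ => hfg i), Finset.sum_congr rfl (fun i _ => hft i),
    Finset.sum_congr rfl (fun i _ => hgs i)] at key
  have hA0 : (0:ℝ) ≤ ∑ i, lam i ^ (r:ℝ) * w i :=
    Finset.sum_nonneg fun i _ => mul_nonneg (Real.rpow_nonneg (hlam i) _) (hw i)
  have hB0 : (0:ℝ) ≤ ∑ i, lam i ^ c * w i :=
    Finset.sum_nonneg fun i _ => mul_nonneg (Real.rpow_nonneg (hlam i) _) (hw i)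
  have hE0 : (0:ℝ) ≤ ∑ i, lam i * w i :=
    Finset.sum_nonneg fun i _ => mul_nonneg (hlam i) (hw i)
  have hAt : (∑ i, lam i ^ (r:ℝ) * w i) ^ t
      ≤ (∑ i, lam i * w i) * (∑ i, lam i ^ c * w i) ^ (t/s) := by
    calc (∑ i, lam i ^ (r:ℝ) * w i) ^ t
        ≤ ((∑ i, lam i * w i) ^ (1/t) * (∑ i, lam i ^ c * w i) ^ (1/s)) ^ t :=
          Real.rpow_le_rpow hA0 key (le_of_lt ht)
      _ = ((∑ i, lam i * w i) ^ (1/t)) ^ t * ((∑ i, lam i ^ c * w i) ^ (1/s)) ^ t :=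
          Real.mul_rpow (Real.rpow_nonneg hE0 _) (Real.rpow_nonneg hB0 _)
      _ = (∑ i, lam i * w i) * (∑ i, lam i ^ c * w i) ^ (t/s) := by
          rw [← Real.rpow_mul hE0, ← Real.rpow_mul hB0, one_div, inv_mul_cancel₀ ht',
            Real.rpow_one]
          congr 1
          ring
  rw [hVE, hpow, hpow]
  rcases eq_or_lt_of_le hB0 with hB | hB
  · rw [← hB, Real.zero_rpow (ne_of_gt (div_pos ht hs)), div_zero]
    exact hE0
  · rw [div_le_iff₀ (Real.rpow_pos_of_pos hB _)]
    exact hAt
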